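/- Let 1 < q < p. For μ > 0 define λ(μ) := inf{(‖u'‖_p² + μ‖u‖_q²)/‖u‖_p² : u 2π-periodic, C¹, not identically zero}. Then the function μ ↦ λ(μ) is concave on (0,∞), satisfies λ(μ) ≤ μ for every μ > 0, and λ(μ) < μ whenever μ > λ₁*/(p − q). -/

import Mathlib

open MeasureTheory Real

/-- The L^r norm on the circle with the uniform probability measure dσ = dx/(2π),
for a 2π-periodic function `u : ℝ → ℝ`. -/
noncomputable def perNorm (r : ℝ) (u : ℝ → ℝ) : ℝ :=
  ((1 / (2 * π)) * ∫ x in (0:ℝ)..(2 * π), |u x| ^ r) ^ (1 / r)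

/-- `u` is 2π-periodic and C¹. -/
def PeriodicC1 (u : ℝ → ℝ) : Prop :=
  Function.Periodic u (2 * π) ∧ ContDiff ℝ 1 u

/-- λ₁ = inf ‖v'‖_p²/‖v‖_p² over 2π-periodic C¹ functions v ≢ 0 with ∫₀^{2π} v dx = 0. -/
noncomputable def lambdaOne (p : ℝ) : ℝ :=
  sInf { l : ℝ | ∃ v : ℝ → ℝ, PeriodicC1 v ∧ v ≠ 0 ∧
    (∫ x in (0:ℝ)..(2 * π), v x) = 0 ∧
    l = (perNorm p (deriv v)) ^ 2 / (perNorm p v) ^ 2 }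

/-- λ₁* = inf ‖v'‖_p²/‖v‖_2² over 2π-periodic C¹ functions v ≢ 0 with ∫₀^{2π} v dx = 0. -/
noncomputable def lambdaOneStar (p : ℝ) : ℝ :=
  sInf { l : ℝ | ∃ v : ℝ → ℝ, PeriodicC1 v ∧ v ≠ 0 ∧
    (∫ x in (0:ℝ)..(2 * π), v x) = 0 ∧
    l = (perNorm p (deriv v)) ^ 2 / (perNorm 2 v) ^ 2 }

/-- The p-Laplacian L_p u = (|u'|^{p-2} u')'. -/
noncomputable def pLap (p : ℝ) (u : ℝ → ℝ) : ℝ → ℝ :=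
  deriv (fun x => |deriv u x| ^ (p - 2) * deriv u x)

set_option maxHeartbeats 1000000
open Set


/-- MVT step: if f 0 = 0 and |f'| ≤ K|s|^n on [-1/2,1/2], then |f s| ≤ K|s|^(n+1). -/
lemma mvt_step (f f' : ℝ → ℝ) (K : ℝ) (hK : 0 ≤ K) (n : ℕ)
    (hd : ∀ s ∈ Icc (-(1/2) : ℝ) (1/2), HasDerivAt f (f' s) s)
    (h0 : f 0 = 0)
    (hb : ∀ s ∈ Icc (-(1/2) : ℝ) (1/2), |f' s| ≤ K * |s| ^ n) :
    ∀ s ∈ Icc (-(1/2) : ℝ) (1/2), |f s| ≤ K * |s| ^ (n + 1) := by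
  intro s hs
  have h0m : (0:ℝ) ∈ Icc (-(1/2) : ℝ) (1/2) := by norm_num
  have hseg : uIcc (0:ℝ) s ⊆ Icc (-(1/2) : ℝ) (1/2) := uIcc_subset_Icc h0m hs
  have habs : ∀ x ∈ uIcc (0:ℝ) s, |x| ≤ |s| := by
    intro x hx
    rcases le_total 0 s with h | h
    · rw [uIcc_of_le h] at hx
      rw [abs_of_nonneg hx.1, abs_of_nonneg h]; exact hx.2
    · rw [uIcc_of_ge h] at hx
      rw [abs_of_nonpos hx.2, abs_of_nonpos h]
      linarith [hx.1]
  have key : ‖f s - f 0‖ ≤ (K * |s| ^ n) * ‖s - 0‖ := by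
    apply Convex.norm_image_sub_le_of_norm_hasDerivWithin_le
      (f' := f') (fun x hx => (hd x (hseg hx)).hasDerivWithinAt) ?_ (convex_uIcc 0 s)
      left_mem_uIcc right_mem_uIcc
    intro x hx
    calc ‖f' x‖ = |f' x| := rfl
      _ ≤ K * |x| ^ n := hb x (hseg hx)
      _ ≤ K * |s| ^ n :=
          mul_le_mul_of_nonneg_left (pow_le_pow_left₀ (abs_nonneg x) (habs x hx) n) hK
  rw [h0, sub_zero, sub_zero] at key
  calc |f s| ≤ K * |s| ^ n * |s| := key
    _ = K * |s| ^ (n + 1) := by ring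


lemma one_add_pos {s : ℝ} (hs : s ∈ Icc (-(1/2) : ℝ) (1/2)) : (0:ℝ) < 1 + s := by
  have := hs.1; linarith

lemma hasDerivAt_one_add_rpow (e : ℝ) {s : ℝ} (hs : s ∈ Icc (-(1/2) : ℝ) (1/2)) :
    HasDerivAt (fun t : ℝ => (1 + t) ^ e) (e * (1 + s) ^ (e - 1)) s := by
  have hb : HasDerivAt (fun t : ℝ => 1 + t) 1 s := (hasDerivAt_id s).const_add 1
  have h := (Real.hasDerivAt_rpow_const (x := 1 + s) (p := e)
    (Or.inl (ne_of_gt (one_add_pos hs)))).comp s hb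
  rw [mul_one] at h; exact h

lemma taylor2 (c : ℝ) : ∃ K : ℝ, 0 ≤ K ∧ ∀ s : ℝ, |s| ≤ 1/2 →
    |(1 + s) ^ c - 1 - c * s - c * (c - 1) / 2 * s ^ 2| ≤ K * |s| ^ 3 := by
  set I : Set ℝ := Icc (-(1/2) : ℝ) (1/2) with hI
  -- bound on third derivative
  have hcont : ContinuousOn (fun s : ℝ => c * (c - 1) * (c - 2) * (1 + s) ^ (c - 3)) I := by
    apply ContinuousOn.mul continuousOn_const
    apply ContinuousOn.rpow_const
    · exact continuousOn_const.add continuousOn_id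
    · intro x hx; exact Or.inl (ne_of_gt (one_add_pos hx))
  obtain ⟨K₀, hK₀⟩ := isCompact_Icc.exists_bound_of_continuousOn hcont
  set K := max K₀ 0 with hKdef
  have hK : 0 ≤ K := le_max_right _ _
  have hb3 : ∀ s ∈ I, |c * (c - 1) * (c - 2) * (1 + s) ^ (c - 3)| ≤ K * |s| ^ 0 := by
    intro s hs
    have h' : |c * (c - 1) * (c - 2) * (1 + s) ^ (c - 3)| ≤ K :=
      le_trans (hK₀ s hs) (le_max_left _ _)
    simpa only [pow_zero, mul_one] using h'
  -- h2
  have hd2 : ∀ s ∈ I, HasDerivAt (fun t => c * (c - 1) * (1 + t) ^ (c - 2) - c * (c - 1))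
      (c * (c - 1) * (c - 2) * (1 + s) ^ (c - 3)) s := by
    intro s hs
    have := ((hasDerivAt_one_add_rpow (c - 2) hs).const_mul (c * (c - 1))).sub_const (c * (c - 1))
    refine this.congr_deriv ?_
    ring_nf
  have h2 : ∀ s ∈ I, |c * (c - 1) * (1 + s) ^ (c - 2) - c * (c - 1)| ≤ K * |s| ^ 1 := by
    apply mvt_step _ _ K hK 0 hd2 (by simp) hb3
  -- h1
  have hd1 : ∀ s ∈ I, HasDerivAt (fun t => c * (1 + t) ^ (c - 1) - c - c * (c - 1) * t)
      (c * (c - 1) * (1 + s) ^ (c - 2) - c * (c - 1)) s := by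
    intro s hs
    have h := (((hasDerivAt_one_add_rpow (c - 1) hs).const_mul c).sub_const c).sub
      ((hasDerivAt_id s).const_mul (c * (c - 1)))
    refine h.congr_deriv ?_
    ring_nf
  have h1 : ∀ s ∈ I, |c * (1 + s) ^ (c - 1) - c - c * (c - 1) * s| ≤ K * |s| ^ 2 := by
    apply mvt_step _ _ K hK 1 hd1 (by simp) h2
  -- h0
  have hd0 : ∀ s ∈ I, HasDerivAt (fun t => (1 + t) ^ c - 1 - c * t - c * (c - 1) / 2 * t ^ 2)
      (c * (1 + s) ^ (c - 1) - c - c * (c - 1) * s) s := by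
    intro s hs
    have h := (((hasDerivAt_one_add_rpow c hs).sub_const 1).sub
      ((hasDerivAt_id s).const_mul c)).sub
      (((hasDerivAt_pow 2 s)).const_mul (c * (c - 1) / 2))
    refine h.congr_deriv ?_
    ring_nf
  have h0 : ∀ s ∈ I, |(1 + s) ^ c - 1 - c * s - c * (c - 1) / 2 * s ^ 2| ≤ K * |s| ^ 3 := by
    apply mvt_step _ _ K hK 2 hd0 (by norm_num) h1
  exact ⟨K, hK, fun s hs => h0 s (abs_le.mp hs)⟩

lemma taylor1 (c : ℝ) : ∃ K : ℝ, 0 ≤ K ∧ ∀ s : ℝ, |s| ≤ 1/2 →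
    |(1 + s) ^ c - 1 - c * s| ≤ K * s ^ 2 := by
  obtain ⟨K, hK, hKt⟩ := taylor2 c
  refine ⟨K / 2 + |c * (c - 1) / 2|, by positivity, fun s hs => ?_⟩
  have h := hKt s hs
  have h3 : |s| ^ 3 ≤ (1/2) * s ^ 2 := by
    have : |s| ^ 3 = |s| * |s| ^ 2 := by ring
    rw [this, sq_abs]
    nlinarith [sq_nonneg s, abs_nonneg s]
  have habs : |c * (c - 1) / 2 * s ^ 2| = |c * (c - 1) / 2| * s ^ 2 := by
    rw [abs_mul, abs_of_nonneg (sq_nonneg s)]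
  calc |(1 + s) ^ c - 1 - c * s|
      ≤ |(1 + s) ^ c - 1 - c * s - c * (c - 1) / 2 * s ^ 2| + |c * (c - 1) / 2 * s ^ 2| := by
        have hsplit : (1 + s) ^ c - 1 - c * s =
            ((1 + s) ^ c - 1 - c * s - c * (c - 1) / 2 * s ^ 2) + c * (c - 1) / 2 * s ^ 2 := by
          ring
        nth_rewrite 1 [hsplit]; exact abs_add_le _ _
    _ ≤ K * |s| ^ 3 + |c * (c - 1) / 2| * s ^ 2 := by rw [habs]; gcongr
    _ ≤ K * ((1/2) * s ^ 2) + |c * (c - 1) / 2| * s ^ 2 := by gcongr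
    _ = (K / 2 + |c * (c - 1) / 2|) * s ^ 2 := by ring



lemma twopi_pos : (0:ℝ) < 2 * π := by positivity

lemma perNorm_J_nonneg (r : ℝ) (u : ℝ → ℝ) :
    0 ≤ (1 / (2 * π)) * ∫ x in (0:ℝ)..(2 * π), |u x| ^ r := by
  apply mul_nonneg (by positivity)
  apply intervalIntegral.integral_nonneg twopi_pos.le
  intro x _
  exact Real.rpow_nonneg (abs_nonneg _) r

lemma perNorm_sq (r : ℝ) (u : ℝ → ℝ) :
    perNorm r u ^ 2 = ((1 / (2 * π)) * ∫ x in (0:ℝ)..(2 * π), |u x| ^ r) ^ (2 / r) := by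
  set J := (1 / (2 * π)) * ∫ x in (0:ℝ)..(2 * π), |u x| ^ r with hJ
  have hJ0 : 0 ≤ J := perNorm_J_nonneg r u
  have : perNorm r u ^ 2 = (J ^ (1/r : ℝ)) ^ ((2:ℕ) : ℝ) := by
    rw [Real.rpow_natCast]; rfl
  rw [this, ← Real.rpow_mul hJ0]
  norm_num
  congr 1
  ring

lemma perNorm_const_one (r : ℝ) (hr : r ≠ 0) : perNorm r (fun _ => (1:ℝ)) = 1 := by
  unfold perNorm
  have : ∀ x : ℝ, |(1:ℝ)| ^ r = 1 := by intro x; rw [abs_one, Real.one_rpow]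
  simp only [abs_one, Real.one_rpow]
  rw [intervalIntegral.integral_const]
  rw [sub_zero, smul_eq_mul, mul_one]
  rw [one_div, inv_mul_cancel₀ twopi_pos.ne']
  exact Real.one_rpow _

lemma perNorm_zero_fun (r : ℝ) (hr : r ≠ 0) : perNorm r (fun _ => (0:ℝ)) = 0 := by
  unfold perNorm
  simp only [abs_zero, Real.zero_rpow hr]
  rw [intervalIntegral.integral_const]
  simp only [smul_eq_mul, mul_zero, sub_zero]
  exact Real.zero_rpow (by simp [hr] : 1/r ≠ 0)

lemma perNorm_two_sq (v : ℝ → ℝ) :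
    perNorm 2 v ^ 2 = (1 / (2 * π)) * ∫ x in (0:ℝ)..(2 * π), (v x) ^ 2 := by
  rw [perNorm_sq]
  have h1 : ∀ x : ℝ, |v x| ^ (2:ℝ) = (v x) ^ 2 := by
    intro x
    rw [show ((2:ℝ)) = ((2:ℕ) : ℝ) by norm_num, Real.rpow_natCast, sq_abs]
  simp only [h1]
  rw [div_self (by norm_num : (2:ℝ) ≠ 0), Real.rpow_one]

lemma perNorm_smul_sq (r : ℝ) (hr : 0 < r) (ε : ℝ) (hε : 0 < ε) (w : ℝ → ℝ) :
    perNorm r (fun x => ε * w x) ^ 2 = ε ^ 2 * perNorm r w ^ 2 := by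
  rw [perNorm_sq, perNorm_sq]
  have h1 : ∀ x : ℝ, |ε * w x| ^ r = ε ^ r * |w x| ^ r := by
    intro x
    rw [abs_mul, abs_of_pos hε, Real.mul_rpow hε.le (abs_nonneg _)]
  simp only [h1]
  rw [intervalIntegral.integral_const_mul]
  have hJ0 : 0 ≤ (1 / (2 * π)) * ∫ x in (0:ℝ)..(2 * π), |w x| ^ r := perNorm_J_nonneg r w
  rw [show (1 / (2 * π)) * (ε ^ r * ∫ x in (0:ℝ)..(2 * π), |w x| ^ r)
      = ε ^ r * ((1 / (2 * π)) * ∫ x in (0:ℝ)..(2 * π), |w x| ^ r) by ring]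
  rw [Real.mul_rpow (Real.rpow_nonneg hε.le r) hJ0]
  congr 1
  rw [← Real.rpow_natCast ε 2, ← Real.rpow_mul hε.le]
  congr 1
  field_simp
  norm_num

lemma exists_bound_periodic (v : ℝ → ℝ) (hper : Function.Periodic v (2 * π))
    (hc : Continuous v) : ∃ M : ℝ, 1 ≤ M ∧ ∀ x : ℝ, |v x| ≤ M := by
  obtain ⟨C, hC⟩ := isCompact_Icc.exists_bound_of_continuousOn
    (hc.continuousOn : ContinuousOn v (Icc (0:ℝ) (2 * π)))
  refine ⟨max C 1, le_max_right _ _, fun x => ?_⟩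
  obtain ⟨y, hy, hxy⟩ := hper.exists_mem_Ico₀ twopi_pos x
  rw [hxy]
  exact le_trans (hC y (Ico_subset_Icc_self hy)) (le_max_left _ _)

lemma sq_integral_pos (v : ℝ → ℝ) (hper : Function.Periodic v (2 * π))
    (hc : Continuous v) (hne : v ≠ 0) :
    0 < ∫ x in (0:ℝ)..(2 * π), (v x) ^ 2 := by
  -- find a point c in (0, 2π) with v c ≠ 0
  have hx0 : ∃ x₀ : ℝ, v x₀ ≠ 0 := by
    by_contra h
    push_neg at h
    exact hne (funext h)
  obtain ⟨x₀, hx₀⟩ := hx0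
  obtain ⟨y, hy, hxy⟩ := hper.exists_mem_Ico₀ twopi_pos x₀
  have hvy : v y ≠ 0 := by rw [← hxy]; exact hx₀
  have hc' : ∃ c : ℝ, 0 < c ∧ c < 2 * π ∧ v c ≠ 0 := by
    rcases lt_or_eq_of_le hy.1 with h | h
    · refine ⟨y, h, hy.2, ?_⟩
      exact hvy
    · -- y = 0
      have hv0 : v 0 ≠ 0 := by rw [← h] at hvy; exact hvy
      have hev : ∀ᶠ x in nhds (0:ℝ), v x ≠ 0 := hc.continuousAt.eventually_ne hv0
      rw [Metric.eventually_nhds_iff] at hev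
      obtain ⟨δ, hδ, hδ'⟩ := hev
      refine ⟨min (δ / 2) 1, by positivity, ?_, ?_⟩
      · have : min (δ / 2) 1 ≤ 1 := min_le_right _ _
        have hpi : (3:ℝ) < π := Real.pi_gt_three
        linarith
      · apply hδ'
        rw [Real.dist_eq, sub_zero, abs_of_pos (by positivity)]
        calc min (δ / 2) 1 ≤ δ / 2 := min_le_left _ _
          _ < δ := by linarith
  obtain ⟨c, hc1, hc2, hvc⟩ := hc'
  -- find an interval around c on which v^2 ≥ (v c)^2 / 2
  have hsqc : 0 < (v c) ^ 2 / 2 := by positivity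
  have hev : ∀ᶠ x in nhds c, (v c) ^ 2 / 2 < (v x) ^ 2 := by
    have hca : ContinuousAt (fun x => (v x) ^ 2) c := (hc.pow 2).continuousAt
    exact hca.eventually (eventually_gt_nhds (by nlinarith [sq_nonneg (v c)]))
  rw [Metric.eventually_nhds_iff] at hev
  obtain ⟨δ, hδ, hδ'⟩ := hev
  set d : ℝ := min (δ / 2) (min (c / 2) ((2 * π - c) / 2)) with hd
  have hd0 : 0 < d := by
    have h1 : (0:ℝ) < (2 * π - c) / 2 := by linarith
    exact lt_min (by positivity) (lt_min (by positivity) h1)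
  have hd1 : d ≤ δ / 2 := min_le_left _ _
  have hd2 : d ≤ c / 2 := le_trans (min_le_right _ _) (min_le_left _ _)
  have hd3 : d ≤ (2 * π - c) / 2 := le_trans (min_le_right _ _) (min_le_right _ _)
  have hcd0 : 0 ≤ c - d := by linarith
  have hcd2 : c + d ≤ 2 * π := by linarith
  have hint : ∀ a b : ℝ, IntervalIntegrable (fun x => (v x) ^ 2) volume a b :=
    fun a b => (hc.pow 2).intervalIntegrable a b
  have hsplit1 : ∫ x in (0:ℝ)..(2 * π), (v x) ^ 2 =
      (∫ x in (0:ℝ)..(c - d), (v x) ^ 2) + ∫ x in (c - d)..(2 * π), (v x) ^ 2 :=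
    (intervalIntegral.integral_add_adjacent_intervals (hint _ _) (hint _ _)).symm
  have hsplit2 : ∫ x in (c - d)..(2 * π), (v x) ^ 2 =
      (∫ x in (c - d)..(c + d), (v x) ^ 2) + ∫ x in (c + d)..(2 * π), (v x) ^ 2 :=
    (intervalIntegral.integral_add_adjacent_intervals (hint _ _) (hint _ _)).symm
  have h1 : 0 ≤ ∫ x in (0:ℝ)..(c - d), (v x) ^ 2 :=
    intervalIntegral.integral_nonneg hcd0 (fun x _ => sq_nonneg _)
  have h3 : 0 ≤ ∫ x in (c + d)..(2 * π), (v x) ^ 2 :=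
    intervalIntegral.integral_nonneg hcd2 (fun x _ => sq_nonneg _)
  have h2 : 2 * d * ((v c) ^ 2 / 2) ≤ ∫ x in (c - d)..(c + d), (v x) ^ 2 := by
    have := intervalIntegral.integral_mono_on (by linarith : c - d ≤ c + d)
      (intervalIntegrable_const (c := (v c) ^ 2 / 2)) (hint _ _)
      (fun x hx => le_of_lt (hδ' (by
        rw [Real.dist_eq]
        have habs : |x - c| ≤ d := abs_le.mpr ⟨by linarith [hx.1], by linarith [hx.2]⟩
        linarith)))
    rw [intervalIntegral.integral_const, smul_eq_mul] at this
    calc 2 * d * ((v c) ^ 2 / 2) = (c + d - (c - d)) * ((v c) ^ 2 / 2) := by ring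
      _ ≤ _ := this
  have : 0 < 2 * d * ((v c) ^ 2 / 2) := by positivity
  linarith


lemma Fest (r : ℝ) (hr : 1 < r) (v : ℝ → ℝ) (hvc : Continuous v)
    (hmean : (∫ x in (0:ℝ)..(2 * π), v x) = 0)
    (M : ℝ) (hM1 : 1 ≤ M) (hbd : ∀ x : ℝ, |v x| ≤ M) :
    ∃ C : ℝ, 0 < C ∧ ∃ δ : ℝ, 0 < δ ∧ δ ≤ 1 ∧ ∀ ε : ℝ, 0 < ε → ε ≤ δ →
      |perNorm r (fun x => 1 + ε * v x) ^ 2 - 1 -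
        (r - 1) * ((1 / (2 * π)) * ∫ x in (0:ℝ)..(2 * π), (v x) ^ 2) * ε ^ 2| ≤ C * ε ^ 3 := by
  obtain ⟨K, hK0, hKt⟩ := taylor2 r
  obtain ⟨K', hK'0, hK't⟩ := taylor1 (2 / r)
  have hr0 : (0:ℝ) < r := by linarith
  have hM0 : (0:ℝ) < M := by linarith
  set V : ℝ := (1 / (2 * π)) * ∫ x in (0:ℝ)..(2 * π), (v x) ^ 2 with hVdef
  have hV0 : 0 ≤ V := by
    apply mul_nonneg (by positivity)
    exact intervalIntegral.integral_nonneg twopi_pos.le (fun x _ => sq_nonneg _)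
  set D : ℝ := r * (r - 1) / 2 * V + K * M ^ 3 + 1 with hDdef
  have hD1 : 1 ≤ D := by
    have h1 : 0 ≤ r * (r - 1) / 2 * V := by
      apply mul_nonneg (by nlinarith) hV0
    have h2 : 0 ≤ K * M ^ 3 := by positivity
    simp only [hDdef]; linarith
  have hD0 : 0 < D := by linarith
  refine ⟨K' * D ^ 2 + 2 * K * M ^ 3 + 1, by positivity,
    min (1 / (2 * M)) (1 / (2 * D)), by positivity, ?_, ?_⟩
  · calc min (1 / (2 * M)) (1 / (2 * D)) ≤ 1 / (2 * M) := min_le_left _ _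
      _ ≤ 1 := by rw [div_le_one (by positivity)]; linarith
  intro ε hε0 hεδ
  have hεM : ε * M ≤ 1 / 2 := by
    have h := hεδ.trans (min_le_left _ _)
    rw [le_div_iff₀ (by positivity)] at h
    nlinarith
  have hεD : ε * D ≤ 1 / 2 := by
    have h := hεδ.trans (min_le_right _ _)
    rw [le_div_iff₀ (by positivity)] at h
    ring_nf at h ⊢
    linarith
  have hε1 : ε ≤ 1 := by nlinarith
  have hsx : ∀ x : ℝ, |ε * v x| ≤ 1 / 2 := by
    intro x
    rw [abs_mul, abs_of_pos hε0]
    calc ε * |v x| ≤ ε * M := by gcongr; exact hbd x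
      _ ≤ 1 / 2 := hεM
  have hpos : ∀ x : ℝ, 0 < 1 + ε * v x := by
    intro x
    have := abs_le.mp (hsx x)
    linarith [this.1]
  set W : ℝ → ℝ := fun x => (1 + ε * v x) ^ r with hWdef
  have hbase : Continuous (fun x : ℝ => 1 + ε * v x) :=
    continuous_const.add (continuous_const.mul hvc)
  have hWc : Continuous W :=
    hbase.rpow_const (fun x => Or.inl (hpos x).ne')
  have hJW : (∫ x in (0:ℝ)..(2 * π), |1 + ε * v x| ^ r) = ∫ x in (0:ℝ)..(2 * π), W x := by
    apply intervalIntegral.integral_congr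
    intro x _
    simp only [hWdef]
    rw [abs_of_pos (hpos x)]
  set f : ℝ → ℝ := fun x => W x - 1 - r * (ε * v x) - r * (r - 1) / 2 * (ε * v x) ^ 2 with hfdef
  have hfb : ∀ x : ℝ, |f x| ≤ K * M ^ 3 * ε ^ 3 := by
    intro x
    have h := hKt (ε * v x) (hsx x)
    calc |f x| ≤ K * |ε * v x| ^ 3 := h
      _ ≤ K * (ε * M) ^ 3 := by
          apply mul_le_mul_of_nonneg_left _ hK0
          apply pow_le_pow_left₀ (abs_nonneg _)
          rw [abs_mul, abs_of_pos hε0]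
          exact mul_le_mul_of_nonneg_left (hbd x) hε0.le
      _ = K * M ^ 3 * ε ^ 3 := by ring
  have hfc : Continuous f := by
    apply Continuous.sub
    apply Continuous.sub
    apply Continuous.sub hWc continuous_const
    · exact continuous_const.mul (continuous_const.mul hvc)
    · exact continuous_const.mul ((continuous_const.mul hvc).pow 2)
  -- compute the integral of f
  have hgsplit : ∀ x : ℝ, f x = W x - (1 + r * ε * v x + (r * (r - 1) / 2 * ε ^ 2) * (v x) ^ 2) := by
    intro x; simp only [hfdef]; ring
  have hgi1 : IntervalIntegrable (fun x : ℝ => 1 + r * ε * v x + (r * (r - 1) / 2 * ε ^ 2) * (v x) ^ 2)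
      volume 0 (2 * π) := by
    apply Continuous.intervalIntegrable
    exact (continuous_const.add (continuous_const.mul hvc)).add
      (continuous_const.mul (hvc.pow 2))
  have hintf : (∫ x in (0:ℝ)..(2 * π), f x) =
      (∫ x in (0:ℝ)..(2 * π), W x) - (2 * π + (r * (r - 1) / 2 * ε ^ 2) * ∫ x in (0:ℝ)..(2 * π), (v x) ^ 2) := by
    have h1 : (∫ x in (0:ℝ)..(2 * π), f x) =
        (∫ x in (0:ℝ)..(2 * π), W x) -
        ∫ x in (0:ℝ)..(2 * π), (1 + r * ε * v x + (r * (r - 1) / 2 * ε ^ 2) * (v x) ^ 2) := by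
      rw [← intervalIntegral.integral_sub (hWc.intervalIntegrable _ _) hgi1]
      apply intervalIntegral.integral_congr
      intro x _
      exact hgsplit x
    rw [h1]
    congr 1
    have hi1 : IntervalIntegrable (fun x : ℝ => 1 + r * ε * v x) volume 0 (2 * π) :=
      (continuous_const.add (continuous_const.mul hvc)).intervalIntegrable _ _
    have hi2 : IntervalIntegrable (fun x : ℝ => (r * (r - 1) / 2 * ε ^ 2) * (v x) ^ 2)
        volume 0 (2 * π) := (continuous_const.mul (hvc.pow 2)).intervalIntegrable _ _
    have hi3 : IntervalIntegrable (fun x : ℝ => r * ε * v x) volume 0 (2 * π) :=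
      (continuous_const.mul hvc).intervalIntegrable _ _
    rw [intervalIntegral.integral_add hi1 hi2,
      intervalIntegral.integral_add (intervalIntegrable_const) hi3]
    rw [intervalIntegral.integral_const, intervalIntegral.integral_const_mul,
      intervalIntegral.integral_const_mul, hmean]
    simp
  have hintfb : |∫ x in (0:ℝ)..(2 * π), f x| ≤ 2 * π * (K * M ^ 3 * ε ^ 3) := by
    calc |∫ x in (0:ℝ)..(2 * π), f x| ≤ ∫ x in (0:ℝ)..(2 * π), |f x| :=
          intervalIntegral.abs_integral_le_integral_abs twopi_pos.le
      _ ≤ ∫ _x in (0:ℝ)..(2 * π), (K * M ^ 3 * ε ^ 3) := by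
          apply intervalIntegral.integral_mono_on twopi_pos.le
            (hfc.abs.intervalIntegrable _ _) intervalIntegrable_const
          intro x _
          exact hfb x
      _ = 2 * π * (K * M ^ 3 * ε ^ 3) := by
          rw [intervalIntegral.integral_const, smul_eq_mul, sub_zero]
  set J : ℝ := (1 / (2 * π)) * ∫ x in (0:ℝ)..(2 * π), |1 + ε * v x| ^ r with hJdef
  have hJf : J - 1 - r * (r - 1) / 2 * V * ε ^ 2 = (1 / (2 * π)) * ∫ x in (0:ℝ)..(2 * π), f x := by
    rw [hintf]
    simp only [hJdef, hJW, hVdef]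
    have hπ : (2 * π) ≠ 0 := twopi_pos.ne'
    field_simp
    ring
  have hJest : |J - 1 - r * (r - 1) / 2 * V * ε ^ 2| ≤ K * M ^ 3 * ε ^ 3 := by
    rw [hJf, abs_mul, abs_of_pos (by positivity : (0:ℝ) < 1 / (2 * π))]
    calc (1 / (2 * π)) * |∫ x in (0:ℝ)..(2 * π), f x|
        ≤ (1 / (2 * π)) * (2 * π * (K * M ^ 3 * ε ^ 3)) := by
          apply mul_le_mul_of_nonneg_left hintfb (by positivity)
      _ = K * M ^ 3 * ε ^ 3 := by field_simp
  set a : ℝ := J - 1 with hadef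
  clear_value V D J a
  have hrr : (0:ℝ) ≤ r * (r - 1) / 2 := by nlinarith
  have hb0 : (0:ℝ) ≤ r * (r - 1) / 2 * V * ε ^ 2 :=
    mul_nonneg (mul_nonneg hrr hV0) (sq_nonneg ε)
  have hE0 : (0:ℝ) ≤ K * M ^ 3 * ε ^ 3 := by positivity
  have h1 : |a| ≤ r * (r - 1) / 2 * V * ε ^ 2 + K * M ^ 3 * ε ^ 3 := by
    have h2 := abs_le.mp hJest
    rw [abs_le]
    constructor <;> [linarith [h2.1]; linarith [h2.2]]
  have hε32 : ε ^ 3 ≤ ε ^ 2 := pow_le_pow_of_le_one hε0.le hε1 (by norm_num)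
  have haD : |a| ≤ D * ε ^ 2 := by
    have h3 : K * M ^ 3 * ε ^ 3 ≤ K * M ^ 3 * ε ^ 2 :=
      mul_le_mul_of_nonneg_left hε32 (by positivity)
    have h4 : (0:ℝ) < ε ^ 2 := by positivity
    simp only [hDdef]
    nlinarith
  have hahalf : |a| ≤ 1 / 2 := by
    have h4 : D * ε ^ 2 ≤ 1 / 2 := by nlinarith
    exact haD.trans h4
  have hP : perNorm r (fun x => 1 + ε * v x) ^ 2 = (1 + a) ^ ((2:ℝ) / r) := by
    rw [perNorm_sq, ← hJdef, show J = 1 + a by rw [hadef]; ring]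
  have htay := hK't a hahalf
  have ha2 : a ^ 2 ≤ D ^ 2 * ε ^ 3 := by
    have h5 : |a| * |a| ≤ (D * ε ^ 2) * (D * ε ^ 2) :=
      mul_le_mul haD haD (abs_nonneg a) (by positivity)
    have h6 : ε ^ 4 ≤ ε ^ 3 := by nlinarith
    nlinarith [sq_abs a]
  have hsplit2 : perNorm r (fun x => 1 + ε * v x) ^ 2 - 1 - (r - 1) * V * ε ^ 2 =
      ((1 + a) ^ ((2:ℝ) / r) - 1 - (2 / r) * a) +
      (2 / r) * (a - r * (r - 1) / 2 * V * ε ^ 2) := by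
    rw [hP]
    have hrne : r ≠ 0 := hr0.ne'
    field_simp
    ring
  have hfinal : |perNorm r (fun x => 1 + ε * v x) ^ 2 - 1 - (r - 1) * V * ε ^ 2| ≤
      K' * (D ^ 2 * ε ^ 3) + 2 * (K * M ^ 3 * ε ^ 3) := by
    rw [hsplit2]
    refine (abs_add_le _ _).trans ?_
    have hA : |(1 + a) ^ ((2:ℝ) / r) - 1 - (2 / r) * a| ≤ K' * (D ^ 2 * ε ^ 3) :=
      htay.trans (mul_le_mul_of_nonneg_left ha2 hK'0)
    have hB : |(2 / r) * (a - r * (r - 1) / 2 * V * ε ^ 2)| ≤ 2 * (K * M ^ 3 * ε ^ 3) := by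
      rw [abs_mul, abs_of_pos (by positivity : (0:ℝ) < 2 / r)]
      have h7 : (2:ℝ) / r ≤ 2 := by
        rw [div_le_iff₀ hr0]; nlinarith
      calc (2 / r) * |a - r * (r - 1) / 2 * V * ε ^ 2| ≤ (2 / r) * (K * M ^ 3 * ε ^ 3) :=
            mul_le_mul_of_nonneg_left hJest (by positivity)
        _ ≤ 2 * (K * M ^ 3 * ε ^ 3) := mul_le_mul_of_nonneg_right h7 hE0
    linarith
  calc |perNorm r (fun x => 1 + ε * v x) ^ 2 - 1 - (r - 1) * V * ε ^ 2|
      ≤ K' * (D ^ 2 * ε ^ 3) + 2 * (K * M ^ 3 * ε ^ 3) := hfinal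
    _ ≤ (K' * D ^ 2 + 2 * K * M ^ 3 + 1) * ε ^ 3 := by nlinarith [pow_pos hε0 3]

/-- properties of μ ↦ λ(μ) (Proposition 2.4). -/
theorem lambda_concave_increasing (p q : ℝ) (hq : 1 < q) (hqp : q < p)
    (lam : ℝ → ℝ)
    (hlam : ∀ m : ℝ, lam m = sInf { l : ℝ | ∃ u : ℝ → ℝ, PeriodicC1 u ∧ u ≠ 0 ∧
      l = ((perNorm p (deriv u)) ^ 2 + m * (perNorm q u) ^ 2) / (perNorm p u) ^ 2 }) :
    ConcaveOn ℝ (Set.Ioi (0:ℝ)) lam ∧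
    (∀ m : ℝ, 0 < m → lam m ≤ m) ∧
    (∀ m : ℝ, lambdaOneStar p / (p - q) < m → lam m < m) := by
  have hp : 1 < p := hq.trans hqp
  have hp0 : (0:ℝ) < p := by linarith
  have hq0 : (0:ℝ) < q := by linarith
  -- the constant function 1 gives the element m
  have hmem_m : ∀ m : ℝ, m ∈ { l : ℝ | ∃ u : ℝ → ℝ, PeriodicC1 u ∧ u ≠ 0 ∧
      l = ((perNorm p (deriv u)) ^ 2 + m * (perNorm q u) ^ 2) / (perNorm p u) ^ 2 } := by
    intro m
    refine ⟨fun _ => 1, ⟨fun x => rfl, contDiff_const⟩, ?_, ?_⟩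
    · intro h
      have := congrFun h 0
      norm_num at this
    · have h1 : deriv (fun _ : ℝ => (1:ℝ)) = fun _ : ℝ => (0:ℝ) := by
        funext x; exact deriv_const x 1
      rw [h1, perNorm_zero_fun p hp0.ne', perNorm_const_one q hq0.ne',
        perNorm_const_one p hp0.ne']
      norm_num
  have hbdd : ∀ m : ℝ, 0 ≤ m → BddBelow { l : ℝ | ∃ u : ℝ → ℝ, PeriodicC1 u ∧ u ≠ 0 ∧
      l = ((perNorm p (deriv u)) ^ 2 + m * (perNorm q u) ^ 2) / (perNorm p u) ^ 2 } := by
    intro m hm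
    refine ⟨0, fun l hl => ?_⟩
    obtain ⟨u, _, _, rfl⟩ := hl
    exact div_nonneg (add_nonneg (sq_nonneg _) (mul_nonneg hm (sq_nonneg _))) (sq_nonneg _)
  have hub : ∀ m : ℝ, 0 ≤ m → lam m ≤ m := by
    intro m hm
    rw [hlam m]
    exact csInf_le (hbdd m hm) (hmem_m m)
  refine ⟨⟨convex_Ioi 0, ?_⟩, fun m hm => hub m hm.le, ?_⟩
  · -- concavity
    intro x hx y hy a b ha hb hab
    simp only [smul_eq_mul]
    rw [hlam x, hlam y, hlam (a * x + b * y)]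
    apply le_csInf ⟨_, hmem_m (a * x + b * y)⟩
    rintro l ⟨u, hu1, hu2, rfl⟩
    have e1 : sInf { l : ℝ | ∃ u : ℝ → ℝ, PeriodicC1 u ∧ u ≠ 0 ∧
        l = ((perNorm p (deriv u)) ^ 2 + x * (perNorm q u) ^ 2) / (perNorm p u) ^ 2 } ≤
        ((perNorm p (deriv u)) ^ 2 + x * (perNorm q u) ^ 2) / (perNorm p u) ^ 2 :=
      csInf_le (hbdd x (le_of_lt hx)) ⟨u, hu1, hu2, rfl⟩
    have e2 : sInf { l : ℝ | ∃ u : ℝ → ℝ, PeriodicC1 u ∧ u ≠ 0 ∧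
        l = ((perNorm p (deriv u)) ^ 2 + y * (perNorm q u) ^ 2) / (perNorm p u) ^ 2 } ≤
        ((perNorm p (deriv u)) ^ 2 + y * (perNorm q u) ^ 2) / (perNorm p u) ^ 2 :=
      csInf_le (hbdd y (le_of_lt hy)) ⟨u, hu1, hu2, rfl⟩
    have key : ((perNorm p (deriv u)) ^ 2 + (a * x + b * y) * (perNorm q u) ^ 2) /
        (perNorm p u) ^ 2 =
        a * (((perNorm p (deriv u)) ^ 2 + x * (perNorm q u) ^ 2) / (perNorm p u) ^ 2) +
        b * (((perNorm p (deriv u)) ^ 2 + y * (perNorm q u) ^ 2) / (perNorm p u) ^ 2) := by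
      have h2 : a * ((perNorm p (deriv u)) ^ 2 + x * (perNorm q u) ^ 2) +
          b * ((perNorm p (deriv u)) ^ 2 + y * (perNorm q u) ^ 2) =
          (perNorm p (deriv u)) ^ 2 + (a * x + b * y) * (perNorm q u) ^ 2 := by
        linear_combination (perNorm p (deriv u)) ^ 2 * hab
      rw [mul_div_assoc', mul_div_assoc', ← add_div, h2]
    rw [key]
    have e1' := mul_le_mul_of_nonneg_left e1 ha
    have e2' := mul_le_mul_of_nonneg_left e2 hb
    linarith
  · -- part 3
    intro m hm
    have hpq : (0:ℝ) < p - q := by linarith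
    have hlstar0 : 0 ≤ lambdaOneStar p := by
      apply Real.sInf_nonneg
      rintro l ⟨v, _, _, _, rfl⟩
      exact div_nonneg (sq_nonneg _) (sq_nonneg _)
    have hm0 : 0 < m := lt_of_le_of_lt (div_nonneg hlstar0 hpq.le) hm
    have hlt : lambdaOneStar p < (p - q) * m := by
      rw [div_lt_iff₀ hpq] at hm
      linarith
    -- the defining set of λ₁* is nonempty (witness: sin)
    have hSne : { l : ℝ | ∃ v : ℝ → ℝ, PeriodicC1 v ∧ v ≠ 0 ∧
        (∫ x in (0:ℝ)..(2 * π), v x) = 0 ∧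
        l = (perNorm p (deriv v)) ^ 2 / (perNorm 2 v) ^ 2 }.Nonempty := by
      refine ⟨(perNorm p (deriv Real.sin)) ^ 2 / (perNorm 2 Real.sin) ^ 2,
        Real.sin, ⟨Real.sin_periodic, Real.contDiff_sin⟩, ?_, ?_, rfl⟩
      · intro h
        have := congrFun h (π / 2)
        rw [Real.sin_pi_div_two] at this
        norm_num at this
      · rw [integral_sin]
        simp [Real.cos_two_pi]
    unfold lambdaOneStar at hlt
    obtain ⟨l, hlmem, hllt⟩ := exists_lt_of_csInf_lt hSne hlt
    obtain ⟨v, hvper, hvne, hvmean, rfl⟩ := hlmem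
    have hvc : Continuous v := hvper.2.continuous
    have hvdiff : Differentiable ℝ v := hvper.2.differentiable one_ne_zero
    have hVipos : 0 < ∫ x in (0:ℝ)..(2 * π), (v x) ^ 2 :=
      sq_integral_pos v hvper.1 hvc hvne
    have hV : (0:ℝ) < (1 / (2 * π)) * ∫ x in (0:ℝ)..(2 * π), (v x) ^ 2 := by positivity
    rw [perNorm_two_sq v, div_lt_iff₀ hV] at hllt
    -- hllt : Sp < (p-q)*m*V
    obtain ⟨M, hM1, hbd⟩ := exists_bound_periodic v hvper.1 hvc
    have hM0 : (0:ℝ) < M := by linarith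
    obtain ⟨Cp, hCp0, δp, hδp0, hδp1, hFp⟩ := Fest p hp v hvc hvmean M hM1 hbd
    obtain ⟨Cq, hCq0, δq, hδq0, hδq1, hFq⟩ := Fest q hq v hvc hvmean M hM1 hbd
    set V : ℝ := (1 / (2 * π)) * ∫ x in (0:ℝ)..(2 * π), (v x) ^ 2 with hVdef
    set Sp : ℝ := (perNorm p (deriv v)) ^ 2 with hSpdef
    set N : ℝ := (p - q) * m * V - Sp with hNdef
    have hN0 : 0 < N := by
      simp only [hNdef]
      have : Sp < (p - q) * m * V := by
        calc Sp < ((p - q) * m) * V := hllt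
          _ = (p - q) * m * V := by ring
      linarith
    have hmC0 : (0:ℝ) < m * (Cp + Cq) + 1 := by positivity
    set ε : ℝ := min (min δp δq) (min (1 / (2 * M)) (min (1 / (2 * Cp)) (N / (2 * (m * (Cp + Cq) + 1))))) with hεdef
    have hε0 : 0 < ε := by
      apply lt_min (lt_min hδp0 hδq0)
      apply lt_min (by positivity)
      apply lt_min (by positivity) (by positivity)
    have hεδp : ε ≤ δp := le_trans (min_le_left _ _) (min_le_left _ _)
    have hεδq : ε ≤ δq := le_trans (min_le_left _ _) (min_le_right _ _)
    have hεM : ε ≤ 1 / (2 * M) := le_trans (min_le_right _ _) (min_le_left _ _)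
    have hεCp : ε ≤ 1 / (2 * Cp) :=
      le_trans (min_le_right _ _) (le_trans (min_le_right _ _) (min_le_left _ _))
    have hεN : ε ≤ N / (2 * (m * (Cp + Cq) + 1)) :=
      le_trans (min_le_right _ _) (le_trans (min_le_right _ _) (min_le_right _ _))
    have hε1 : ε ≤ 1 := hεδp.trans hδp1
    have hFp' := hFp ε hε0 hεδp
    have hFq' := hFq ε hε0 hεδq
    -- the test function u = 1 + ε v
    have huper : PeriodicC1 (fun x => 1 + ε * v x) := by
      constructor
      · intro x
        simp only
        rw [hvper.1 x]
      · exact contDiff_const.add (contDiff_const.mul hvper.2)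
    have hu0pos : 0 < 1 + ε * v 0 := by
      have h1 := abs_le.mp (hbd 0)
      have h2 : ε * M ≤ 1 / 2 := by
        rw [le_div_iff₀ (by positivity)] at hεM
        ring_nf at hεM ⊢
        linarith
      nlinarith [mul_nonneg hε0.le (show (0:ℝ) ≤ v 0 + M by linarith [h1.1])]
    have hune : (fun x : ℝ => 1 + ε * v x) ≠ 0 := by
      intro h
      have := congrFun h 0
      simp only [Pi.zero_apply] at this
      linarith
    have hder : deriv (fun x : ℝ => 1 + ε * v x) = fun x => ε * deriv v x := by
      funext x
      have h1 : HasDerivAt (fun x : ℝ => 1 + ε * v x) (ε * deriv v x) x :=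
        (((hvdiff x).hasDerivAt).const_mul ε).const_add 1
      exact h1.deriv
    have hA : perNorm p (deriv (fun x : ℝ => 1 + ε * v x)) ^ 2 = ε ^ 2 * Sp := by
      rw [hder, perNorm_smul_sq p hp0 ε hε0 (deriv v)]
    -- abbreviations
    set Fp' : ℝ := perNorm p (fun x : ℝ => 1 + ε * v x) ^ 2 with hFpdef
    set Fq' : ℝ := perNorm q (fun x : ℝ => 1 + ε * v x) ^ 2 with hFqdef
    have hFpb := abs_le.mp hFp'
    have hFqb := abs_le.mp hFq'
    clear_value V Sp N ε Fp' Fq'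
    have hε3 : ε ^ 3 ≤ ε := by
      calc ε ^ 3 ≤ ε ^ 1 := pow_le_pow_of_le_one hε0.le hε1 (by norm_num)
        _ = ε := pow_one ε
    have hVpos : 0 < V := hV
    have hpV : 0 ≤ (p - 1) * V * ε ^ 2 := by
      apply mul_nonneg (mul_nonneg (by linarith) hVpos.le) (sq_nonneg ε)
    have hCpε : Cp * ε ^ 3 ≤ 1 / 2 := by
      rw [le_div_iff₀ (by positivity)] at hεCp
      have h1 : Cp * ε ^ 3 ≤ Cp * ε := mul_le_mul_of_nonneg_left hε3 hCp0.le
      have h2 : ε * (2 * Cp) = 2 * (Cp * ε) := by ring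
      rw [h2] at hεCp
      linarith
    have hFppos : 0 < Fp' := by
      have h1 := hFpb.1
      linarith
    -- the key inequality
    have hmCε : m * (Cp + Cq) * ε < N := by
      rw [le_div_iff₀ (by positivity)] at hεN
      have hX : 0 ≤ m * (Cp + Cq) * ε := by positivity
      have h2 : ε * (2 * (m * (Cp + Cq) + 1)) = 2 * (m * (Cp + Cq) * ε) + 2 * ε := by ring
      rw [h2] at hεN
      linarith
    have hstep1 : (p - q) * V * ε ^ 2 - (Cp + Cq) * ε ^ 3 ≤ Fp' - Fq' := by
      have h1 := hFpb.1
      have h2 := hFqb.2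
      linarith
    have hmul := mul_le_mul_of_nonneg_left hstep1 hm0.le
    have hint1 : 0 < (N - m * (Cp + Cq) * ε) * ε ^ 2 :=
      mul_pos (sub_pos.mpr hmCε) (pow_pos hε0 2)
    have hSpN : Sp = (p - q) * m * V - N := by simp only [hNdef]; ring
    have hkey : ε ^ 2 * Sp + m * Fq' < m * Fp' := by
      rw [hSpN]
      ring_nf at hmul hint1 ⊢
      linarith [hmul, hint1]
    -- conclude
    have hmem_u : (perNorm p (deriv (fun x : ℝ => 1 + ε * v x)) ^ 2 +
        m * perNorm q (fun x : ℝ => 1 + ε * v x) ^ 2) /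
        perNorm p (fun x : ℝ => 1 + ε * v x) ^ 2 ∈
        { l : ℝ | ∃ u : ℝ → ℝ, PeriodicC1 u ∧ u ≠ 0 ∧
          l = ((perNorm p (deriv u)) ^ 2 + m * (perNorm q u) ^ 2) / (perNorm p u) ^ 2 } :=
      ⟨fun x => 1 + ε * v x, huper, hune, rfl⟩
    have hlam_le := csInf_le (hbdd m hm0.le) hmem_u
    rw [← hlam m] at hlam_le
    apply lt_of_le_of_lt hlam_le
    rw [hA, ← hFpdef, ← hFqdef]
    rw [div_lt_iff₀ hFppos]
    linarith [hkey]
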